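/- Nikol'skii inequality for hyperbolic crosses in terms of the H_p-norm: there is a constant C(d,p) such that for every n ∈ ℕ and every trigonometric polynomial f with frequencies in the stepped hyperbolic cross Q_n := ∪_{‖s‖_1 ≤ n} ρ(s), one has ‖f‖_∞ ≤ C(d,p) 2^{n/p} n^{d−1} max_{‖s‖_1 ≤ n} ‖δ_s(f)‖_p, where δ_s(f) is the part of the Fourier series of f with frequencies in ρ(s). -/

import Mathlib

open MeasureTheory Filter
open scoped BigOperators ENNReal Classical Real

noncomputable section

instance : Fact (0 < 2 * Real.pi) := ⟨by positivity⟩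

/-- The `d`-dimensional torus `𝕋^d`, realized as `(ℝ/2πℤ)^d`. -/
abbrev Torus (d : ℕ) := Fin d → AddCircle (2 * Real.pi)

/-- The character `e^{i(k,x)}` on the torus. -/
def charF {d : ℕ} (k : Fin d → ℤ) (x : Torus d) : ℂ :=
  ∏ j, fourier (k j) (x j)

/-- The `L_p` norm on the torus (`p = ∞` gives the essential sup norm). -/
def Lnorm {d : ℕ} (p : ℝ≥0∞) (f : Torus d → ℂ) : ℝ :=
  (eLpNorm f p volume).toReal

/-- The dyadic block `ρ(s) = {k : [2^{s_j-1}] ≤ |k_j| < 2^{s_j}}`. -/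
def rho (d : ℕ) (s : Fin d → ℕ) : Set (Fin d → ℤ) :=
  {k | ∀ j, ((2 : ℤ) ^ (s j)) / 2 ≤ |k j| ∧ |k j| < (2 : ℤ) ^ (s j)}

/-- The stepped hyperbolic cross `Q_n = ∪_{‖s‖₁ ≤ n} ρ(s)`. -/
def QSet (d n : ℕ) : Set (Fin d → ℤ) :=
  ⋃ s ∈ {s : Fin d → ℕ | ∑ j, s j ≤ n}, rho d s

/-- Trigonometric polynomials with frequencies in `Q`. -/
def trig (d : ℕ) (Q : Set (Fin d → ℤ)) : Set (Torus d → ℂ) :=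
  {f | ∃ c : (Fin d → ℤ) → ℂ, (Function.support c).Finite ∧ Function.support c ⊆ Q ∧
        ∀ x, f x = ∑' k, c k * charF k x}

/-- The unit `L_p` ball of `trig d Q`. -/
def trigBall (d : ℕ) (Q : Set (Fin d → ℤ)) (p : ℝ≥0∞) : Set (Torus d → ℂ) :=
  {f | f ∈ trig d Q ∧ Lnorm p f ≤ 1}

/-- The Kolmogorov width `d_m(A, L_∞)` of a set of functions on the torus, in the
uniform norm. -/
def kolW {d : ℕ} (m : ℕ) (A : Set (Torus d → ℂ)) : ℝ :=
  ⨅ u : Fin m → Torus d → ℂ, ⨆ f ∈ A, ⨅ c : Fin m → ℂ, Lnorm ⊤ (f - ∑ i, c i • u i)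


/-- The dyadic piece `δ_s(f)` of the Fourier series with coefficients `c`:
the part with frequencies in `ρ(s)`. -/
def deltaS (d : ℕ) (s : Fin d → ℕ) (c : (Fin d → ℤ) → ℂ) : Torus d → ℂ :=
  fun x => ∑' k : Fin d → ℤ, (if k ∈ rho d s then c k else 0) * charF k x

section NikAuxSection
open ComplexConjugate

namespace NikAux

variable {d : ℕ}

instance : IsFiniteMeasure (volume : Measure (Torus d)) := by
  constructor
  rw [MeasureTheory.volume_pi, MeasureTheory.Measure.pi_univ]
  exact ENNReal.prod_lt_top (fun i _ => by rw [AddCircle.measure_univ]; exact ENNReal.ofReal_lt_top)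

lemma continuous_charF (k : Fin d → ℤ) : Continuous (charF k) := by
  unfold charF
  exact continuous_finset_prod _ fun j _ => (fourier (k j)).continuous.comp (continuous_apply j)

lemma norm_charF (k : Fin d → ℤ) (x : Torus d) : ‖charF k x‖ = 1 := by
  unfold charF
  rw [norm_prod]
  refine Finset.prod_eq_one fun j _ => ?_
  rw [fourier_apply]
  exact Circle.norm_coe _

lemma charF_add (k l : Fin d → ℤ) (x : Torus d) :
    charF (k + l) x = charF k x * charF l x := by
  unfold charF
  rw [← Finset.prod_mul_distrib]
  exact Finset.prod_congr rfl fun j _ => by rw [Pi.add_apply, fourier_add]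

lemma charF_mul_conj (k l : Fin d → ℤ) (x : Torus d) :
    charF k x * conj (charF l x) = charF (k - l) x := by
  unfold charF
  rw [map_prod, ← Finset.prod_mul_distrib]
  refine Finset.prod_congr rfl fun j _ => ?_
  rw [← fourier_neg, ← fourier_add, Pi.sub_apply, sub_eq_add_neg]

lemma integrable_torus {f : Torus d → ℂ} (hf : Continuous f) : Integrable f := by
  have := hf.continuousOn.integrableOn_compact (μ := (volume : Measure (Torus d)))
      (isCompact_univ (X := Torus d))
  rwa [integrableOn_univ] at this

lemma integrable_torus' {f : Torus d → ℝ} (hf : Continuous f) : Integrable f := by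
  have := hf.continuousOn.integrableOn_compact (μ := (volume : Measure (Torus d)))
      (isCompact_univ (X := Torus d))
  rwa [integrableOn_univ] at this

lemma integral_fourier_addCircle (m : ℤ) :
    ∫ x : AddCircle (2 * Real.pi), fourier m x = if m = 0 then ((2 * Real.pi : ℝ) : ℂ) else 0 := by
  rcases eq_or_ne m 0 with h | h
  · simp only [h, if_pos, fourier_zero]
    rw [integral_const, measureReal_def, AddCircle.measure_univ, ENNReal.toReal_ofReal (by positivity),
      Complex.real_smul, mul_one]
  · rw [if_neg h]
    exact integral_eq_zero_of_add_right_eq_neg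
      (fourier_add_half_inv_index h (by positivity))

lemma integral_charF (m : Fin d → ℤ) :
    ∫ x : Torus d, charF m x = if m = 0 then ((2 * Real.pi : ℝ) : ℂ) ^ d else 0 := by
  have h := MeasureTheory.integral_fintype_prod_eq_prod
      (f := fun j (y : AddCircle (2 * Real.pi)) => fourier (m j) y) (μ := fun _ => volume)
  rw [← MeasureTheory.volume_pi] at h
  unfold charF
  rw [h]
  simp_rw [integral_fourier_addCircle]
  rcases eq_or_ne m 0 with h0 | h0
  · subst h0
    simp
  · obtain ⟨j, hj⟩ := Function.ne_iff.mp h0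
    rw [Pi.zero_apply] at hj
    rw [if_neg h0]
    exact Finset.prod_eq_zero (Finset.mem_univ j) (by simp [hj])


def tp (F : Finset (Fin d → ℤ)) (a : (Fin d → ℤ) → ℂ) : Torus d → ℂ :=
  fun x => ∑ k ∈ F, a k * charF k x

lemma continuous_tp (F : Finset (Fin d → ℤ)) (a : (Fin d → ℤ) → ℂ) : Continuous (tp F a) :=
  continuous_finset_sum _ fun k _ => continuous_const.mul (continuous_charF k)

lemma integral_tp_mul_conj (F : Finset (Fin d → ℤ)) (a : (Fin d → ℤ) → ℂ)
    (k₀ : Fin d → ℤ) (h : k₀ ∈ F) :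
    ∫ x : Torus d, tp F a x * conj (charF k₀ x) = a k₀ * ((2 * Real.pi : ℝ) : ℂ) ^ d := by
  have hpt : ∀ x : Torus d, tp F a x * conj (charF k₀ x)
      = ∑ k ∈ F, a k * charF (k - k₀) x := by
    intro x
    rw [tp, Finset.sum_mul]
    exact Finset.sum_congr rfl fun k _ => by rw [mul_assoc, charF_mul_conj]
  simp_rw [hpt]
  rw [integral_finset_sum F (fun k _ =>
    (integrable_torus (continuous_const.mul (continuous_charF _)) :
      Integrable (fun x : Torus d => a k * charF (k - k₀) x)))]
  rw [Finset.sum_eq_single_of_mem k₀ h]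
  · rw [integral_const_mul, integral_charF, if_pos (sub_self k₀)]
  · intro k hk hne
    rw [integral_const_mul, integral_charF, if_neg (sub_ne_zero.mpr hne), mul_zero]

lemma coeff_le (F : Finset (Fin d → ℤ)) (a : (Fin d → ℤ) → ℂ)
    (k₀ : Fin d → ℤ) (h : k₀ ∈ F) :
    ‖a k₀‖ * (2 * Real.pi) ^ d ≤ ∫ x : Torus d, ‖tp F a x‖ := by
  have h1 : ‖∫ x : Torus d, tp F a x * conj (charF k₀ x)‖ = ‖a k₀‖ * (2 * Real.pi) ^ d := by
    rw [integral_tp_mul_conj F a k₀ h, norm_mul, norm_pow, Complex.norm_real,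
      Real.norm_eq_abs, abs_of_pos (by positivity)]
  calc ‖a k₀‖ * (2 * Real.pi) ^ d
      = ‖∫ x : Torus d, tp F a x * conj (charF k₀ x)‖ := h1.symm
    _ ≤ ∫ x : Torus d, ‖tp F a x * conj (charF k₀ x)‖ := norm_integral_le_integral_norm _
    _ = ∫ x : Torus d, ‖tp F a x‖ := by
        refine integral_congr_ae (Filter.Eventually.of_forall fun x => ?_)
        show ‖tp F a x * conj (charF k₀ x)‖ = ‖tp F a x‖
        rw [norm_mul, RCLike.norm_conj, norm_charF, mul_one]

lemma tp_bound (F : Finset (Fin d → ℤ)) (a : (Fin d → ℤ) → ℂ) (x : Torus d) :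
    ‖tp F a x‖ ≤ (F.card : ℝ) * ((2 * Real.pi) ^ d)⁻¹ * ∫ y : Torus d, ‖tp F a y‖ := by
  have hpi : (0 : ℝ) < (2 * Real.pi) ^ d := by positivity
  calc ‖tp F a x‖ ≤ ∑ k ∈ F, ‖a k * charF k x‖ := norm_sum_le _ _
    _ = ∑ k ∈ F, ‖a k‖ := by
        refine Finset.sum_congr rfl fun k _ => ?_
        rw [norm_mul, norm_charF, mul_one]
    _ ≤ ∑ _k ∈ F, ((2 * Real.pi) ^ d)⁻¹ * ∫ y : Torus d, ‖tp F a y‖ := by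
        refine Finset.sum_le_sum fun k hk => ?_
        have := coeff_le F a k hk
        rw [inv_mul_eq_div, le_div_iff₀ hpi]
        linarith
    _ = (F.card : ℝ) * (((2 * Real.pi) ^ d)⁻¹ * ∫ y : Torus d, ‖tp F a y‖) := by
        rw [Finset.sum_const, nsmul_eq_mul]
    _ = (F.card : ℝ) * ((2 * Real.pi) ^ d)⁻¹ * ∫ y : Torus d, ‖tp F a y‖ := by ring

open scoped Pointwise in
lemma tp_mul (F G : Finset (Fin d → ℤ)) (a b : (Fin d → ℤ) → ℂ) :
    ∃ cc, ∀ x, tp F a x * tp G b x = tp (F + G) cc x := by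
  refine ⟨fun m => ∑ q ∈ (F ×ˢ G).filter (fun q => q.1 + q.2 = m), a q.1 * b q.2, fun x => ?_⟩
  rw [tp, tp, tp, Finset.sum_mul_sum]
  calc ∑ k ∈ F, ∑ l ∈ G, (a k * charF k x) * (b l * charF l x)
      = ∑ q ∈ F ×ˢ G, (a q.1 * b q.2) * charF (q.1 + q.2) x := by
        rw [Finset.sum_product]
        refine Finset.sum_congr rfl fun k _ => Finset.sum_congr rfl fun l _ => ?_
        rw [charF_add]; ring
    _ = ∑ m ∈ F + G, ∑ q ∈ (F ×ˢ G).filter (fun q => q.1 + q.2 = m),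
          (a q.1 * b q.2) * charF (q.1 + q.2) x := by
        refine (Finset.sum_fiberwise_of_maps_to (fun q hq => ?_) _).symm
        rw [Finset.mem_product] at hq
        exact Finset.add_mem_add hq.1 hq.2
    _ = ∑ m ∈ F + G, (∑ q ∈ (F ×ˢ G).filter (fun q => q.1 + q.2 = m),
          a q.1 * b q.2) * charF m x := by
        refine Finset.sum_congr rfl fun m _ => ?_
        rw [Finset.sum_mul]
        refine Finset.sum_congr rfl fun q hq => ?_
        rw [(Finset.mem_filter.mp hq).2]

lemma tp_subset {F G : Finset (Fin d → ℤ)} (h : F ⊆ G) (a : (Fin d → ℤ) → ℂ) :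
    ∃ a', ∀ x, tp F a x = tp G a' x := by
  refine ⟨fun k => if k ∈ F then a k else 0, fun x => ?_⟩
  rw [tp, tp, ← Finset.sum_subset h]
  · exact Finset.sum_congr rfl fun k hk => by rw [if_pos hk]
  · intro k _ hk
    simp [hk]


def box (s : Fin d → ℕ) (R : ℕ) : Finset (Fin d → ℤ) :=
  Fintype.piFinset fun j => Finset.Ioo (-(R * 2 ^ (s j) : ℤ)) (R * 2 ^ (s j))

lemma mem_box {s : Fin d → ℕ} {R : ℕ} {k : Fin d → ℤ} :
    k ∈ box s R ↔ ∀ j, |k j| < (R : ℤ) * 2 ^ (s j) := by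
  simp only [box, Fintype.mem_piFinset, Finset.mem_Ioo]
  exact forall_congr' fun j => (abs_lt).symm

open scoped Pointwise in
lemma box_add_subset (s : Fin d → ℕ) (R₁ R₂ : ℕ) :
    box s R₁ + box s R₂ ⊆ box s (R₁ + R₂) := by
  intro k hk
  rw [Finset.mem_add] at hk
  obtain ⟨y, hy, z, hz, rfl⟩ := hk
  rw [mem_box] at hy hz ⊢
  intro j
  have h1 := hy j
  have h2 := hz j
  have := abs_add_le (y j) (z j)
  have hcast : ((R₁ + R₂ : ℕ) : ℤ) = (R₁ : ℤ) + R₂ := by push_cast; ring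
  rw [Pi.add_apply, hcast, add_mul]
  exact lt_of_le_of_lt this (add_lt_add h1 h2)

lemma tp_pow (s : Fin d → ℕ) (F : Finset (Fin d → ℤ)) (a : (Fin d → ℤ) → ℂ)
    (hF : F ⊆ box s 1) (r : ℕ) (hr : 1 ≤ r) :
    ∃ cc, ∀ x, (tp F a x) ^ r = tp (box s r) cc x := by
  induction r, hr using Nat.le_induction with
  | base =>
      obtain ⟨a', h⟩ := tp_subset hF a
      exact ⟨a', fun x => by rw [pow_one, h]⟩
  | succ r hr ih =>
      obtain ⟨cc, hcc⟩ := ih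
      obtain ⟨a', ha'⟩ := tp_subset hF a
      obtain ⟨dd, hdd⟩ := tp_mul (box s r) (box s 1) cc a'
      obtain ⟨ee, hee⟩ := tp_subset (box_add_subset s r 1) dd
      exact ⟨ee, fun x => by rw [pow_succ, hcc, ha', hdd, hee]⟩

lemma card_box (s : Fin d → ℕ) (R : ℕ) :
    (box s R).card ≤ (2 * R) ^ d * 2 ^ (∑ j, s j) := by
  rw [box, Fintype.card_piFinset]
  have hb : ∀ j : Fin d,
      (Finset.Ioo (-(R * 2 ^ (s j) : ℤ)) (R * 2 ^ (s j))).card ≤ 2 * R * 2 ^ (s j) := by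
    intro j
    rw [Int.card_Ioo]
    refine Int.toNat_le.mpr ?_
    push_cast
    ring_nf
    omega
  calc ∏ j, (Finset.Ioo (-(R * 2 ^ (s j) : ℤ)) (R * 2 ^ (s j))).card
      ≤ ∏ j, 2 * R * 2 ^ (s j) := Finset.prod_le_prod' fun j _ => hb j
    _ = (2 * R) ^ d * 2 ^ (∑ j, s j) := by
        rw [Finset.prod_mul_distrib, Finset.prod_const, Finset.prod_pow_eq_pow_sum,
          Finset.card_univ, Fintype.card_fin]


lemma block_est (p : ℝ) (hp : 1 ≤ p) (s : Fin d → ℕ) (F : Finset (Fin d → ℤ))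
    (a : (Fin d → ℤ) → ℂ) (hF : F ⊆ box s 1) (x : Torus d) :
    ‖tp F a x‖ ≤ ((2 * (⌈p⌉₊ : ℝ)) ^ d * (2 : ℝ) ^ ((∑ j, s j : ℝ) / p)) *
      Lnorm (ENNReal.ofReal p) (tp F a) := by
  have hp0 : (0 : ℝ) < p := lt_of_lt_of_le one_pos hp
  set r : ℕ := ⌈p⌉₊ with hrdef
  have hr1 : 1 ≤ r := Nat.one_le_ceil_iff.mpr hp0
  have hpr : p ≤ (r : ℝ) := Nat.le_ceil p
  set g := tp F a with hgdef
  have hg : Continuous g := continuous_tp F a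
  -- maximum
  obtain ⟨x₀, -, hmax⟩ := (isCompact_univ (X := Torus d)).exists_isMaxOn
    Set.univ_nonempty (hg.norm.continuousOn)
  have hx₀ : ∀ y, ‖g y‖ ≤ ‖g x₀‖ := fun y => hmax (Set.mem_univ y)
  set M := ‖g x₀‖ with hMdef
  have hM0 : 0 ≤ M := norm_nonneg _
  have hLnn : 0 ≤ Lnorm (ENNReal.ofReal p) g := ENNReal.toReal_nonneg
  have hC0 : (0 : ℝ) ≤ (2 * (r : ℝ)) ^ d * (2 : ℝ) ^ ((∑ j, s j : ℝ) / p) := by positivity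
  rcases eq_or_lt_of_le hM0 with hMz | hM
  · refine le_trans (hx₀ x) ?_
    rw [← hMz]
    exact mul_nonneg hC0 hLnn
  -- Memℒp and the L^p formula
  have hmem : MemLp g (ENNReal.ofReal p) volume :=
    MemLp.of_bound hg.aestronglyMeasurable M (Filter.Eventually.of_forall hx₀)
  set I := ∫ y : Torus d, ‖g y‖ ^ p with hIdef
  have hI0 : 0 ≤ I := integral_nonneg fun y => Real.rpow_nonneg (norm_nonneg _) p
  have hL : Lnorm (ENNReal.ofReal p) g = I ^ p⁻¹ := by
    rw [Lnorm, hmem.eLpNorm_eq_integral_rpow_norm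
      ((ENNReal.ofReal_pos.mpr hp0).ne') ENNReal.ofReal_ne_top]
    simp only [ENNReal.toReal_ofReal hp0.le]
    rw [ENNReal.toReal_ofReal (Real.rpow_nonneg hI0 _)]
  -- power trick
  obtain ⟨cc, hcc⟩ := tp_pow s F a hF r hr1
  have hrint : Integrable (fun y : Torus d => ‖g y‖ ^ (r : ℕ)) :=
    integrable_torus' ((hg.norm).pow r)
  have hpint : Integrable (fun y : Torus d => M ^ ((r : ℝ) - p) * ‖g y‖ ^ p) := by
    refine Integrable.const_mul ?_ _
    exact integrable_torus' (hg.norm.rpow_const (fun y => Or.inr hp0.le))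
  have step1 : M ^ (r : ℕ) ≤ ((box s r).card : ℝ) * ((2 * Real.pi) ^ d)⁻¹ *
      ∫ y : Torus d, ‖g y‖ ^ (r : ℕ) := by
    have h1 : M ^ (r : ℕ) = ‖tp (box s r) cc x₀‖ := by rw [← hcc x₀, norm_pow]
    have h2 := tp_bound (box s r) cc x₀
    have h3 : (fun y : Torus d => ‖tp (box s r) cc y‖) = fun y => ‖g y‖ ^ (r : ℕ) := by
      funext y; rw [← hcc y, norm_pow]
    rw [h1]
    rw [h3] at h2
    exact h2
  have step2 : ∫ y : Torus d, ‖g y‖ ^ (r : ℕ) ≤ M ^ ((r : ℝ) - p) * I := by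
    have hpt : ∀ y : Torus d, ‖g y‖ ^ (r : ℕ) ≤ M ^ ((r : ℝ) - p) * ‖g y‖ ^ p := by
      intro y
      rcases eq_or_lt_of_le (norm_nonneg (g y)) with hz | hz
      · rw [← hz, zero_pow (by omega : r ≠ 0), Real.zero_rpow hp0.ne', mul_zero]
      · have hsplit : ‖g y‖ ^ (r : ℕ) = ‖g y‖ ^ ((r : ℝ) - p) * ‖g y‖ ^ p := by
          rw [← Real.rpow_natCast (‖g y‖) r, ← Real.rpow_add hz, sub_add_cancel]
        rw [hsplit]
        have hle : ‖g y‖ ^ ((r : ℝ) - p) ≤ M ^ ((r : ℝ) - p) :=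
          Real.rpow_le_rpow (norm_nonneg _) (hx₀ y) (sub_nonneg.mpr hpr)
        exact mul_le_mul_of_nonneg_right hle (Real.rpow_nonneg (norm_nonneg _) p)
    calc ∫ y : Torus d, ‖g y‖ ^ (r : ℕ)
        ≤ ∫ y : Torus d, M ^ ((r : ℝ) - p) * ‖g y‖ ^ p :=
          integral_mono hrint hpint hpt
      _ = M ^ ((r : ℝ) - p) * I := by rw [hIdef, integral_const_mul]
  -- combine
  set B : ℝ := (2 * (r : ℝ)) ^ d * 2 ^ (∑ j, s j) with hBdef
  have h2r : (1 : ℝ) ≤ 2 * (r : ℝ) := by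
    have : (1 : ℝ) ≤ (r : ℝ) := by exact_mod_cast hr1
    linarith
  have h2rd : (1 : ℝ) ≤ (2 * (r : ℝ)) ^ d := one_le_pow₀ h2r
  have hB0 : (0 : ℝ) ≤ B := by positivity
  have hKcard : ((box s r).card : ℝ) * ((2 * Real.pi) ^ d)⁻¹ ≤ B := by
    have hc : ((box s r).card : ℝ) ≤ B := by
      have := card_box s r
      calc ((box s r).card : ℝ) ≤ ((2 * r) ^ d * 2 ^ (∑ j, s j) : ℕ) := by exact_mod_cast this
        _ = B := by rw [hBdef]; push_cast; ring
    have hinv : ((2 * Real.pi) ^ d)⁻¹ ≤ 1 := by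
      rw [inv_le_one_iff₀]
      right
      exact one_le_pow₀ (by nlinarith [Real.pi_gt_three])
    calc ((box s r).card : ℝ) * ((2 * Real.pi) ^ d)⁻¹
        ≤ B * 1 := mul_le_mul hc hinv (by positivity) hB0
      _ = B := mul_one B
  have hIr0 : 0 ≤ ∫ y : Torus d, ‖g y‖ ^ (r : ℕ) := integral_nonneg fun y => by positivity
  have hMrp : 0 < M ^ ((r : ℝ) - p) := Real.rpow_pos_of_pos hM _
  have key : M ^ p ≤ B * I := by
    have hchain : M ^ (r : ℕ) ≤ B * (M ^ ((r : ℝ) - p) * I) := by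
      calc M ^ (r : ℕ)
          ≤ ((box s r).card : ℝ) * ((2 * Real.pi) ^ d)⁻¹ *
            ∫ y : Torus d, ‖g y‖ ^ (r : ℕ) := step1
        _ ≤ B * (M ^ ((r : ℝ) - p) * I) :=
            mul_le_mul hKcard step2 hIr0 hB0
    have hsplitM : M ^ (r : ℕ) = M ^ ((r : ℝ) - p) * M ^ p := by
      rw [← Real.rpow_natCast M r, ← Real.rpow_add hM, sub_add_cancel]
    have : M ^ ((r : ℝ) - p) * M ^ p ≤ M ^ ((r : ℝ) - p) * (B * I) := by
      rw [← hsplitM]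
      calc M ^ (r : ℕ) ≤ B * (M ^ ((r : ℝ) - p) * I) := hchain
        _ = M ^ ((r : ℝ) - p) * (B * I) := by ring
    exact le_of_mul_le_mul_left this hMrp
  -- conclude
  have hBrp : B ^ p⁻¹ ≤ (2 * (r : ℝ)) ^ d * (2 : ℝ) ^ ((∑ j, s j : ℝ) / p) := by
    have hsplit : B ^ p⁻¹ = ((2 * (r : ℝ)) ^ d) ^ p⁻¹ * ((2 : ℝ) ^ (∑ j, s j)) ^ p⁻¹ := by
      rw [hBdef, Real.mul_rpow (by positivity) (by positivity)]
    have h1 : ((2 * (r : ℝ)) ^ d) ^ p⁻¹ ≤ (2 * (r : ℝ)) ^ d := by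
      calc ((2 * (r : ℝ)) ^ d) ^ p⁻¹ ≤ ((2 * (r : ℝ)) ^ d) ^ (1 : ℝ) :=
            Real.rpow_le_rpow_of_exponent_le h2rd (inv_le_one_of_one_le₀ hp)
        _ = (2 * (r : ℝ)) ^ d := Real.rpow_one _
    have h2 : ((2 : ℝ) ^ (∑ j, s j)) ^ p⁻¹ = (2 : ℝ) ^ ((∑ j, s j : ℝ) / p) := by
      rw [← Real.rpow_natCast 2 (∑ j, s j), ← Real.rpow_mul (by norm_num : (0:ℝ) ≤ 2),
        div_eq_mul_inv]
      congr 1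
      push_cast
      ring
    rw [hsplit, h2]
    exact mul_le_mul_of_nonneg_right h1 (Real.rpow_nonneg (by positivity) _)
  calc ‖tp F a x‖ ≤ M := hx₀ x
    _ = (M ^ p) ^ p⁻¹ := (Real.rpow_rpow_inv hM0 hp0.ne').symm
    _ ≤ (B * I) ^ p⁻¹ :=
        Real.rpow_le_rpow (Real.rpow_nonneg hM0 p) key (inv_nonneg.mpr hp0.le)
    _ = B ^ p⁻¹ * I ^ p⁻¹ := Real.mul_rpow hB0 hI0
    _ ≤ ((2 * (r : ℝ)) ^ d * (2 : ℝ) ^ ((∑ j, s j : ℝ) / p)) * I ^ p⁻¹ :=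
        mul_le_mul_of_nonneg_right hBrp (Real.rpow_nonneg hI0 _)
    _ = ((2 * (r : ℝ)) ^ d * (2 : ℝ) ^ ((∑ j, s j : ℝ) / p)) *
        Lnorm (ENNReal.ofReal p) (tp F a) := by rw [hL]


instance fintypeS (d n : ℕ) : Fintype {s : Fin d → ℕ // ∑ j, s j ≤ n} := by
  refine Fintype.ofInjective
    (fun s => (fun j => (⟨s.1 j, ?_⟩ : Fin (n + 1))) : _ → (Fin d → Fin (n + 1))) ?_
  · exact Nat.lt_succ_of_le (le_trans
      (Finset.single_le_sum (fun i _ => Nat.zero_le (s.1 i)) (Finset.mem_univ j)) s.2)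
  · intro s t h
    ext j
    exact congrArg Fin.val (congrFun h j)

lemma fiber_card (d n m : ℕ) (hd : 1 ≤ d) :
    ((Fintype.piFinset fun _ : Fin d => Finset.range (n + 1)).filter
      (fun s => (∑ j, s j) = m)).card ≤ (n + 1) ^ (d - 1) := by
  set j₀ : Fin d := ⟨d - 1, by omega⟩ with hj₀
  set T : Finset (Fin d → ℕ) :=
    Fintype.piFinset (fun j => if j = j₀ then ({0} : Finset ℕ) else Finset.range (n + 1)) with hT
  have hmaps : ∀ s ∈ (Fintype.piFinset fun _ : Fin d => Finset.range (n + 1)).filter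
      (fun s => (∑ j, s j) = m), Function.update s j₀ 0 ∈ T := by
    intro s hs
    rw [Finset.mem_filter, Fintype.mem_piFinset] at hs
    rw [hT, Fintype.mem_piFinset]
    intro j
    by_cases h : j = j₀
    · subst h
      simp [Function.update_self]
    · rw [Function.update_of_ne h, if_neg h]
      exact hs.1 j
  have hinj : Set.InjOn (fun s => Function.update s j₀ 0)
      (((Fintype.piFinset fun _ : Fin d => Finset.range (n + 1)).filter
        (fun s => (∑ j, s j) = m) : Finset (Fin d → ℕ)) : Set (Fin d → ℕ)) := by
    intro s hs t ht h
    rw [Finset.coe_filter, Set.mem_setOf_eq] at hs ht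
    have hco : ∀ j, j ≠ j₀ → s j = t j := by
      intro j hj
      have := congrFun h j
      simpa [Function.update_of_ne hj] using this
    have hsum : ∑ j ∈ Finset.univ.erase j₀, s j = ∑ j ∈ Finset.univ.erase j₀, t j :=
      Finset.sum_congr rfl fun j hj => hco j (Finset.mem_erase.mp hj).1
    have hs' := Finset.sum_erase_add Finset.univ s (Finset.mem_univ j₀)
    have ht' := Finset.sum_erase_add Finset.univ t (Finset.mem_univ j₀)
    have hj0 : s j₀ = t j₀ := by
      have e1 : ∑ j ∈ Finset.univ.erase j₀, s j + s j₀ = m := by rw [hs']; exact hs.2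
      have e2 : ∑ j ∈ Finset.univ.erase j₀, t j + t j₀ = m := by rw [ht']; exact ht.2
      omega
    funext j
    by_cases hj : j = j₀
    · rw [hj, hj0]
    · exact hco j hj
  have hcard := Finset.card_le_card_of_injOn _ hmaps hinj
  refine le_trans hcard (le_of_eq ?_)
  rw [hT, Fintype.card_piFinset]
  have : ∀ j : Fin d, (if j = j₀ then ({0} : Finset ℕ) else Finset.range (n + 1)).card
      = if j = j₀ then 1 else n + 1 := by
    intro j
    by_cases h : j = j₀ <;> simp [h]
  simp_rw [this]
  rw [← Finset.mul_prod_erase Finset.univ _ (Finset.mem_univ j₀), if_pos rfl, one_mul]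
  rw [Finset.prod_congr rfl (fun j hj => if_neg (Finset.mem_erase.mp hj).1),
    Finset.prod_const, Finset.card_erase_of_mem (Finset.mem_univ j₀),
    Finset.card_univ, Fintype.card_fin]

lemma comb (d n : ℕ) (hd : 1 ≤ d) (hn : 1 ≤ n) (q : ℝ) (hq : 1 < q) :
    ∑ s ∈ (Fintype.piFinset fun _ : Fin d => Finset.range (n + 1)).filter
        (fun s => ∑ j, s j ≤ n), q ^ (∑ j, s j)
      ≤ 2 ^ (d - 1) * (q / (q - 1)) * (n : ℝ) ^ (d - 1) * q ^ n := by
  have hq0 : (0 : ℝ) < q := lt_trans one_pos hq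
  have hq1 : (0 : ℝ) < q - 1 := sub_pos.mpr hq
  set S' := (Fintype.piFinset fun _ : Fin d => Finset.range (n + 1)).filter
    (fun s => ∑ j, s j ≤ n) with hS'
  have hmaps : ∀ s ∈ S', (∑ j, s j) ∈ Finset.range (n + 1) := by
    intro s hs
    rw [hS', Finset.mem_filter] at hs
    exact Finset.mem_range.mpr (Nat.lt_succ_of_le hs.2)
  rw [← Finset.sum_fiberwise_of_maps_to hmaps (fun s => q ^ (∑ j, s j))]
  have hfib : ∀ m ∈ Finset.range (n + 1),
      ∑ s ∈ S'.filter (fun s => (∑ j, s j) = m), q ^ (∑ j, s j)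
        ≤ ((n + 1 : ℕ) : ℝ) ^ (d - 1) * q ^ m := by
    intro m hm
    have h1 : ∑ s ∈ S'.filter (fun s => (∑ j, s j) = m), q ^ (∑ j, s j)
        = (S'.filter (fun s => (∑ j, s j) = m)).card * q ^ m := by
      rw [Finset.sum_congr rfl (fun s hs => by
        rw [(Finset.mem_filter.mp hs).2]), Finset.sum_const, nsmul_eq_mul]
    rw [h1]
    have hsub : S'.filter (fun s => (∑ j, s j) = m) ⊆
        (Fintype.piFinset fun _ : Fin d => Finset.range (n + 1)).filter
          (fun s => (∑ j, s j) = m) := by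
      intro s hs
      rw [Finset.mem_filter] at hs ⊢
      exact ⟨(Finset.mem_filter.mp hs.1).1, hs.2⟩
    have hc : (S'.filter (fun s => (∑ j, s j) = m)).card ≤ (n + 1) ^ (d - 1) :=
      le_trans (Finset.card_le_card hsub) (fiber_card d n m hd)
    have : ((S'.filter (fun s => (∑ j, s j) = m)).card : ℝ) ≤ ((n + 1 : ℕ) : ℝ) ^ (d - 1) := by
      exact_mod_cast hc
    exact mul_le_mul_of_nonneg_right this (by positivity)
  calc ∑ m ∈ Finset.range (n + 1), ∑ s ∈ S'.filter (fun s => (∑ j, s j) = m), q ^ (∑ j, s j)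
      ≤ ∑ m ∈ Finset.range (n + 1), ((n + 1 : ℕ) : ℝ) ^ (d - 1) * q ^ m :=
        Finset.sum_le_sum hfib
    _ = ((n + 1 : ℕ) : ℝ) ^ (d - 1) * ∑ m ∈ Finset.range (n + 1), q ^ m := by
        rw [Finset.mul_sum]
    _ ≤ ((n + 1 : ℕ) : ℝ) ^ (d - 1) * (q / (q - 1) * q ^ n) := by
        refine mul_le_mul_of_nonneg_left ?_ (by positivity)
        rw [geom_sum_eq hq.ne' (n + 1), div_le_iff₀ hq1]
        have heq : q / (q - 1) * q ^ n * (q - 1) = q ^ (n + 1) := by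
          field_simp
          ring
        have hpos : (0:ℝ) < q ^ (n + 1) := pow_pos hq0 _
        nlinarith
    _ ≤ 2 ^ (d - 1) * (q / (q - 1)) * (n : ℝ) ^ (d - 1) * q ^ n := by
        have h1 : ((n + 1 : ℕ) : ℝ) ^ (d - 1) ≤ 2 ^ (d - 1) * (n : ℝ) ^ (d - 1) := by
          rw [← mul_pow]
          refine pow_le_pow_left₀ (by positivity) ?_ _
          push_cast
          have : (1 : ℝ) ≤ (n : ℝ) := by exact_mod_cast hn
          linarith
        calc ((n + 1 : ℕ) : ℝ) ^ (d - 1) * (q / (q - 1) * q ^ n)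
            ≤ (2 ^ (d - 1) * (n : ℝ) ^ (d - 1)) * (q / (q - 1) * q ^ n) :=
              mul_le_mul_of_nonneg_right h1 (by positivity)
          _ = 2 ^ (d - 1) * (q / (q - 1)) * (n : ℝ) ^ (d - 1) * q ^ n := by ring


lemma rho_unique {k : Fin d → ℤ} {s s' : Fin d → ℕ}
    (h : k ∈ rho d s) (h' : k ∈ rho d s') : s = s' := by
  funext j
  obtain ⟨h1, h2⟩ := h j
  obtain ⟨h1', h2'⟩ := h' j
  have key : ∀ a b : ℕ, a < b → ((2:ℤ) ^ b) / 2 ≤ |k j| → |k j| < (2:ℤ) ^ a → False := by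
    intro a b hab hle hlt
    have h2b : (2:ℤ) ^ a * 2 ≤ (2:ℤ) ^ b := by
      calc (2:ℤ) ^ a * 2 = 2 ^ (a + 1) := (pow_succ 2 a).symm
        _ ≤ 2 ^ b := pow_le_pow_right₀ (by norm_num) hab
    have hdiv : (2:ℤ) ^ a ≤ 2 ^ b / 2 := (Int.le_ediv_iff_mul_le (by norm_num)).mpr h2b
    omega
  rcases lt_trichotomy (s j) (s' j) with h | h | h
  · exact absurd (key _ _ h h1' h2) not_false
  · exact h
  · exact absurd (key _ _ h h1 h2') not_false

lemma rho_subset_box (s : Fin d → ℕ) : {k : Fin d → ℤ | k ∈ rho d s} ⊆ ↑(box s 1) := by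
  intro k hk
  rw [Finset.mem_coe, mem_box]
  intro j
  have := (hk j).2
  simpa using this

end NikAux

open NikAux

/-- Nikol'skii inequality for hyperbolic crosses in terms of the `H_p`-norm:
`‖f‖_∞ ≤ C(d,p) 2^{n/p} n^{d-1} max_{‖s‖₁ ≤ n} ‖δ_s(f)‖_p` for every trigonometric
polynomial `f` with frequencies in `Q_n`. -/
theorem nikolskii_hyperbolic_Hp (d : ℕ) (hd : 1 ≤ d) (p : ℝ) (hp : 1 ≤ p) :
    ∃ C : ℝ, 0 < C ∧ ∀ n : ℕ, 1 ≤ n → ∀ c : (Fin d → ℤ) → ℂ,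
      (Function.support c).Finite → Function.support c ⊆ QSet d n →
      Lnorm ⊤ (fun x => ∑' k, c k * charF k x) ≤
        C * (2 : ℝ) ^ ((n : ℝ) / p) * (n : ℝ) ^ (d - 1) *
          ⨆ s : {s : Fin d → ℕ // ∑ j, s j ≤ n}, Lnorm (ENNReal.ofReal p) (deltaS d s.1 c) := by

  have hp0 : (0 : ℝ) < p := lt_of_lt_of_le one_pos hp
  set q : ℝ := (2 : ℝ) ^ (p⁻¹ : ℝ) with hqdef
  have hq : 1 < q := (Real.one_lt_rpow_iff_of_pos (by norm_num)).mpr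
    (Or.inl ⟨by norm_num, inv_pos.mpr hp0⟩)
  have hq1 : (0 : ℝ) < q - 1 := sub_pos.mpr hq
  have hqpow : ∀ m : ℕ, q ^ m = (2 : ℝ) ^ ((m : ℝ) / p) := by
    intro m
    rw [hqdef, ← Real.rpow_natCast ((2:ℝ) ^ (p⁻¹ : ℝ)) m,
      ← Real.rpow_mul (by norm_num : (0:ℝ) ≤ 2)]
    rw [div_eq_mul_inv, mul_comm]
  set r : ℕ := ⌈p⌉₊ with hrdef
  refine ⟨(2 * (r : ℝ)) ^ d * (2 ^ (d - 1) * (q / (q - 1))), by positivity, ?_⟩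
  intro n hn c hfin hsupp
  set S := {s : Fin d → ℕ // ∑ j, s j ≤ n} with hS
  set F : Finset (Fin d → ℤ) := hfin.toFinset with hF
  have hFsupp : ∀ k, k ∈ F ↔ c k ≠ 0 := by
    intro k
    rw [hF, Set.Finite.mem_toFinset, Function.mem_support]
  set Fs : (Fin d → ℕ) → Finset (Fin d → ℤ) := fun s => F.filter (· ∈ rho d s) with hFs
  -- identification of deltaS with tp
  have hδ : ∀ s : Fin d → ℕ, deltaS d s c = tp (Fs s) c := by
    intro s
    funext x
    have hz : ∀ k ∉ Fs s, (if k ∈ rho d s then c k else 0) * charF k x = 0 := by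
      intro k hk
      by_cases hkρ : k ∈ rho d s
      · have hkF : k ∉ F := fun hkF => hk (Finset.mem_filter.mpr ⟨hkF, hkρ⟩)
        have hc0 : c k = 0 := by
          by_contra hc
          exact hkF ((hFsupp k).mpr hc)
        rw [if_pos hkρ, hc0, zero_mul]
      · rw [if_neg hkρ, zero_mul]
    simp only [deltaS, tp]
    rw [tsum_eq_sum hz]
    refine Finset.sum_congr rfl fun k hk => ?_
    rw [if_pos (Finset.mem_filter.mp hk).2]
  have hfeq : (fun x => ∑' k, c k * charF k x) = tp F c := by
    funext x
    rw [tp]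
    refine tsum_eq_sum fun k hk => ?_
    have : c k = 0 := by
      by_contra hc
      exact hk ((hFsupp k).mpr hc)
    rw [this, zero_mul]
  -- decomposition
  have hdecomp : ∀ x : Torus d, tp F c x = ∑ s : S, tp (Fs s.1) c x := by
    intro x
    have h1 : ∀ s : S, tp (Fs s.1) c x
        = ∑ k ∈ F, (if k ∈ rho d s.1 then c k * charF k x else 0) := by
      intro s
      rw [tp, Finset.sum_filter]
    calc tp F c x = ∑ k ∈ F, c k * charF k x := rfl
      _ = ∑ k ∈ F, ∑ s : S, (if k ∈ rho d s.1 then c k * charF k x else 0) := by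
          refine Finset.sum_congr rfl fun k hk => ?_
          have hkQ : k ∈ QSet d n := hsupp ((hFsupp k).mp hk |> Function.mem_support.mpr)
          rw [QSet, Set.mem_iUnion₂] at hkQ
          obtain ⟨s₀, hs₀, hk₀⟩ := hkQ
          rw [Set.mem_setOf_eq] at hs₀
          have hsingle : ∑ s : S, (if k ∈ rho d s.1 then c k * charF k x else 0)
              = c k * charF k x := by
            rw [Finset.sum_eq_single_of_mem (⟨s₀, hs₀⟩ : S) (Finset.mem_univ _)]
            · exact if_pos hk₀
            · intro s _ hne
              exact if_neg fun hkρ => hne (Subtype.ext (rho_unique hkρ hk₀))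
          exact hsingle.symm
      _ = ∑ s : S, ∑ k ∈ F, (if k ∈ rho d s.1 then c k * charF k x else 0) := Finset.sum_comm
      _ = ∑ s : S, tp (Fs s.1) c x := by
          exact Finset.sum_congr rfl fun s _ => (h1 s).symm
  -- suprema
  set Lmax : ℝ := ⨆ s : S, Lnorm (ENNReal.ofReal p) (deltaS d s.1 c) with hLmax
  have hbdd : BddAbove (Set.range fun s : S => Lnorm (ENNReal.ofReal p) (deltaS d s.1 c)) :=
    Set.Finite.bddAbove (Set.finite_range _)
  have hLs : ∀ s : S, Lnorm (ENNReal.ofReal p) (deltaS d s.1 c) ≤ Lmax :=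
    fun s => le_ciSup hbdd s
  have hLmax0 : 0 ≤ Lmax := by
    refine le_trans ?_ (hLs ⟨0, by simp⟩)
    exact ENNReal.toReal_nonneg
  -- block estimates
  have hFsbox : ∀ s : Fin d → ℕ, Fs s ⊆ box s 1 := by
    intro s k hk
    exact rho_subset_box s (Finset.mem_filter.mp hk).2
  have hblock : ∀ (s : S) (x : Torus d), ‖tp (Fs s.1) c x‖
      ≤ ((2 * (r : ℝ)) ^ d * q ^ (∑ j, s.1 j)) * Lmax := by
    intro s x
    have hb := block_est p hp s.1 (Fs s.1) c (hFsbox s.1) x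
    rw [← hδ s.1] at hb
    rw [← hδ s.1]
    refine le_trans hb ?_
    have hnn : (0:ℝ) ≤ (2 * (r : ℝ)) ^ d * (2 : ℝ) ^ ((∑ j, (s.1 j : ℝ)) / p) := by positivity
    have hcast : (2 : ℝ) ^ ((∑ j, (s.1 j : ℝ)) / p) = q ^ (∑ j, s.1 j) := by
      rw [hqpow (∑ j, s.1 j)]
      congr 2
      push_cast
      ring
    rw [hcast] at hnn ⊢
    exact mul_le_mul_of_nonneg_left (hLs s) hnn
  -- sum over s
  have hsum : ∑ s : S, q ^ (∑ j, s.1 j)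
      ≤ 2 ^ (d - 1) * (q / (q - 1)) * (n : ℝ) ^ (d - 1) * q ^ n := by
    have hiff : ∀ s : Fin d → ℕ,
        s ∈ (Fintype.piFinset fun _ : Fin d => Finset.range (n + 1)).filter
          (fun s => ∑ j, s j ≤ n) ↔ (∑ j, s j ≤ n) := by
      intro s
      rw [Finset.mem_filter, Fintype.mem_piFinset]
      constructor
      · exact fun h => h.2
      · intro h
        refine ⟨fun j => Finset.mem_range.mpr (Nat.lt_succ_of_le ?_), h⟩
        exact le_trans (Finset.single_le_sum (fun i _ => Nat.zero_le (s i))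
          (Finset.mem_univ j)) h
    rw [← Finset.sum_subtype _ hiff (fun s => q ^ (∑ j, s j))]
    exact comb d n hd hn q hq
  -- pointwise bound
  have hpt : ∀ x : Torus d, ‖tp F c x‖
      ≤ (2 * (r : ℝ)) ^ d * (2 ^ (d - 1) * (q / (q - 1))) *
        (2 : ℝ) ^ ((n : ℝ) / p) * (n : ℝ) ^ (d - 1) * Lmax := by
    intro x
    calc ‖tp F c x‖ = ‖∑ s : S, tp (Fs s.1) c x‖ := by rw [hdecomp x]
      _ ≤ ∑ s : S, ‖tp (Fs s.1) c x‖ := norm_sum_le _ _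
      _ ≤ ∑ s : S, ((2 * (r : ℝ)) ^ d * q ^ (∑ j, s.1 j)) * Lmax :=
          Finset.sum_le_sum fun s _ => hblock s x
      _ = (2 * (r : ℝ)) ^ d * (∑ s : S, q ^ (∑ j, s.1 j)) * Lmax := by
          rw [← Finset.sum_mul, Finset.mul_sum]
      _ ≤ (2 * (r : ℝ)) ^ d * (2 ^ (d - 1) * (q / (q - 1)) * (n : ℝ) ^ (d - 1) * q ^ n) *
          Lmax := by
          refine mul_le_mul_of_nonneg_right (mul_le_mul_of_nonneg_left hsum (by positivity))
            hLmax0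
      _ = (2 * (r : ℝ)) ^ d * (2 ^ (d - 1) * (q / (q - 1))) *
          (2 : ℝ) ^ ((n : ℝ) / p) * (n : ℝ) ^ (d - 1) * Lmax := by
          rw [← hqpow n]
          ring
  -- conclude via essential sup
  rw [hfeq]
  have hRHS0 : 0 ≤ (2 * (r : ℝ)) ^ d * (2 ^ (d - 1) * (q / (q - 1))) *
      (2 : ℝ) ^ ((n : ℝ) / p) * (n : ℝ) ^ (d - 1) * Lmax := by
    have : (0:ℝ) ≤ (2 * (r : ℝ)) ^ d * (2 ^ (d - 1) * (q / (q - 1))) *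
        (2 : ℝ) ^ ((n : ℝ) / p) * (n : ℝ) ^ (d - 1) := by positivity
    exact mul_nonneg this hLmax0
  rw [Lnorm, eLpNorm_exponent_top]
  refine ENNReal.toReal_le_of_le_ofReal hRHS0 ?_
  exact eLpNormEssSup_le_of_ae_bound (Filter.Eventually.of_forall hpt)

end NikAuxSection

end
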